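/- For any field F and any x, y ∈ F such that x, y, xy, (1−y)/(1−xy), (1−x)/(1−xy) all lie in F \ {0,1}, the five-term element [x] + [1−xy] + [y] + [(1−y)/(1−xy)] + [(1−x)/(1−xy)] lies in the kernel of ∂ : ℤ[F \ {0,1}] → Λ²(F*) ⊗ ℚ, ∂([x]) = x ∧ (1−x). -/

import Mathlib

open scoped Classical

open scoped TensorProduct

variable (F : Type*) [Field F]

/-- The image of `x ∈ F*` in `(F*) ⊗ ℚ` (written additively), with the convention that `0 ↦ 0`. -/
noncomputable def unitsQ (x : F) : ℚ ⊗[ℤ] Additive Fˣ :=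
  if h : x = 0 then 0 else (1 : ℚ) ⊗ₜ[ℤ] Additive.ofMul (Units.mk0 x h)

/-- The wedge `a ∧ b` of two elements of `(F*) ⊗ ℚ`, realized in the degree-two part of the
exterior algebra of the `ℚ`-vector space `(F*) ⊗ ℚ`; this degree-two part is
`Λ²(F*) ⊗ ℚ`. -/
noncomputable def wedgeQ (a b : ℚ ⊗[ℤ] Additive Fˣ) :
    ExteriorAlgebra ℚ (ℚ ⊗[ℤ] Additive Fˣ) :=
  ExteriorAlgebra.ι ℚ a * ExteriorAlgebra.ι ℚ b

/-- The map `∂([x]) = x ∧ (1 - x)`, valued in `Λ²(F*) ⊗ ℚ`. -/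
noncomputable def del (x : F) : ExteriorAlgebra ℚ (ℚ ⊗[ℤ] Additive Fˣ) :=
  wedgeQ F (unitsQ F x) (unitsQ F (1 - x))

lemma unitsQ_mul (a b : F) (ha : a ≠ 0) (hb : b ≠ 0) :
    unitsQ F (a * b) = unitsQ F a + unitsQ F b := by
  simp only [unitsQ, dif_neg ha, dif_neg hb, dif_neg (mul_ne_zero ha hb)]
  rw [← TensorProduct.tmul_add]
  congr 1
  rw [← ofMul_mul]
  congr 1
  ext
  simp

lemma unitsQ_div (a b : F) (ha : a ≠ 0) (hb : b ≠ 0) :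
    unitsQ F (a / b) = unitsQ F a - unitsQ F b := by
  simp only [unitsQ, dif_neg ha, dif_neg hb, dif_neg (div_ne_zero ha hb)]
  rw [← TensorProduct.tmul_sub]
  congr 1
  rw [← ofMul_div]
  congr 1
  ext
  simp

lemma ring_helper {R : Type*} [Ring R] (a b c d e : R)
    (h1 : a*b + b*a = 0) (h2 : c*d + d*c = 0) (h3 : b*d + d*b = 0)
    (h4 : d*e + e*d = 0) (h5 : e*b + b*e = 0) (h6 : e*e = 0) :
    a*b + e*(a+c) + c*d + (d-e)*(c+b-e) + (b-e)*(a+d-e) = 0 := by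
  have key : a*b + e*(a+c) + c*d + (d-e)*(c+b-e) + (b-e)*(a+d-e)
      = (a*b + b*a) + (c*d + d*c) + (b*d + d*b) - (d*e + e*d) - (e*b + b*e) + e*e + e*e := by
    noncomm_ring
  rw [key, h1, h2, h3, h4, h5, h6]
  simp

/-- The five-term element `[x] + [1-xy] + [y] + [(1-y)/(1-xy)] + [(1-x)/(1-xy)]` lies in the
kernel of `∂ : ℤ[F \ {0,1}] → Λ²(F*) ⊗ ℚ`. -/
theorem del_five_term (x y : F)
    (hx0 : x ≠ 0) (hx1 : x ≠ 1) (hy0 : y ≠ 0) (hy1 : y ≠ 1)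
    (hxy0 : x * y ≠ 0) (hxy1 : x * y ≠ 1)
    (ha0 : (1 - y) / (1 - x * y) ≠ 0) (ha1 : (1 - y) / (1 - x * y) ≠ 1)
    (hb0 : (1 - x) / (1 - x * y) ≠ 0) (hb1 : (1 - x) / (1 - x * y) ≠ 1) :
    del F x + del F (1 - x * y) + del F y +
      del F ((1 - y) / (1 - x * y)) + del F ((1 - x) / (1 - x * y)) = 0 := by
  have h1x : (1 : F) - x ≠ 0 := sub_ne_zero.mpr (Ne.symm hx1)
  have h1y : (1 : F) - y ≠ 0 := sub_ne_zero.mpr (Ne.symm hy1)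
  have h1xy : (1 : F) - x * y ≠ 0 := sub_ne_zero.mpr (Ne.symm hxy1)
  set A := unitsQ F x with hA
  set B := unitsQ F (1 - x) with hB
  set C := unitsQ F y with hC
  set D := unitsQ F (1 - y) with hD
  set E := unitsQ F (1 - x * y) with hE
  have e1 : del F x = wedgeQ F A B := rfl
  have e2 : del F (1 - x * y) = wedgeQ F E (A + C) := by
    rw [del]
    congr 1
    rw [sub_sub_cancel, unitsQ_mul F x y hx0 hy0]
  have e3 : del F y = wedgeQ F C D := rfl
  have e4 : del F ((1 - y) / (1 - x * y)) = wedgeQ F (D - E) (C + B - E) := by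
    rw [del]
    have harg : (1 : F) - (1 - y) / (1 - x * y) = (y * (1 - x)) / (1 - x * y) := by
      rw [eq_div_iff h1xy, sub_mul, div_mul_cancel₀ _ h1xy]
      ring
    rw [harg, unitsQ_div F _ _ h1y h1xy, unitsQ_div F _ _ (mul_ne_zero hy0 h1x) h1xy,
      unitsQ_mul F y (1 - x) hy0 h1x]
  have e5 : del F ((1 - x) / (1 - x * y)) = wedgeQ F (B - E) (A + D - E) := by
    rw [del]
    have harg : (1 : F) - (1 - x) / (1 - x * y) = (x * (1 - y)) / (1 - x * y) := by
      field_simp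
      ring
    rw [harg, unitsQ_div F _ _ h1x h1xy, unitsQ_div F _ _ (mul_ne_zero hx0 h1y) h1xy,
      unitsQ_mul F x (1 - y) hx0 h1y]
  rw [e1, e2, e3, e4, e5]
  simp only [wedgeQ, map_add, map_sub]
  exact ring_helper _ _ _ _ _
    (ExteriorAlgebra.ι_add_mul_swap _ _) (ExteriorAlgebra.ι_add_mul_swap _ _)
    (ExteriorAlgebra.ι_add_mul_swap _ _) (ExteriorAlgebra.ι_add_mul_swap _ _)
    (ExteriorAlgebra.ι_add_mul_swap _ _) (ExteriorAlgebra.ι_sq_zero _)
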